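/- Let G be a finite abelian group, A ⊆ G of density α > 0, and ε ∈ (0,1). Then there exists a dissociated set Λ ⊆ Ĝ with |Λ| ≤ (2/ε²)·log(1/α) such that every character ξ ∈ Ĝ outside the {-1,0,1}-span ⟨Λ⟩ satisfies |𝔼_{x∼μ_A} conj(ξ(x))| ≤ ε, where μ_A is the uniform probability measure on A. -/

import Mathlib

open scoped Classical BigOperators
open Finset

noncomputable instance addCharFintype (G : Type*) [AddCommGroup G] [Fintype G] :
    Fintype (AddChar G ℂ) := Fintype.ofFinite _

/-- Fourier transform on a finite abelian group: `f^(ψ) = 𝔼_x f(x) conj(ψ(x))`. -/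
noncomputable def ftG {G : Type*} [AddCommGroup G] [Fintype G] (f : G → ℂ)
    (ψ : AddChar G ℂ) : ℂ :=
  (∑ x, f x * (starRingEnd ℂ) (ψ x)) / (Fintype.card G : ℂ)

/-- The `{-1,0,1}`-span of a finite set of characters. -/
def spanSet {G : Type*} [AddCommGroup G] [Fintype G] (Λ : Finset (AddChar G ℂ)) :
    Set (AddChar G ℂ) :=
  {ψ | ∃ η : AddChar G ℂ → ℤ, (∀ l, η l ∈ ({-1, 0, 1} : Set ℤ)) ∧
        ∀ x, ψ x = ∏ l ∈ Λ, (l x) ^ (η l)}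

/-- A finite set of characters is dissociated if the only `{-1,0,1}`-relation
among its elements is the trivial one. -/
def Dissociated {G : Type*} [AddCommGroup G] [Fintype G] (Λ : Finset (AddChar G ℂ)) : Prop :=
  ∀ η : AddChar G ℂ → ℤ, (∀ l, η l ∈ ({-1, 0, 1} : Set ℤ)) →
    (∀ x, ∏ l ∈ Λ, (l x) ^ (η l) = 1) → ∀ l ∈ Λ, η l = 0

/-- The fourfold convolution count `Λ₄(f₁,f₂,f₃,f₄)`, an average over quadruples
with `x₁ + x₂ = x₃ + x₄`. -/
noncomputable def L4 {G : Type*} [AddCommGroup G] [Fintype G]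
    (f₁ f₂ f₃ f₄ : G → ℂ) : ℂ :=
  (∑ x₁, ∑ x₂, ∑ x₃, f₁ x₁ * f₂ x₂ * (starRingEnd ℂ) (f₃ x₃ * f₄ (x₁ + x₂ - x₃)))
    / (Fintype.card G : ℂ) ^ 3

section Helpers

variable {G : Type*} [AddCommGroup G] [Fintype G]

lemma addChar_ne_zero (ψ : AddChar G ℂ) (x : G) : ψ x ≠ 0 := by
  have h : ψ x * ψ (-x) = 1 := by
    rw [← AddChar.map_add_eq_mul, add_neg_cancel, AddChar.map_zero_eq_one]
  exact left_ne_zero_of_mul_eq_one h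

lemma addChar_abs (ψ : AddChar G ℂ) (x : G) : ‖ψ x‖ = 1 := by
  have hn : Fintype.card G ≠ 0 := Fintype.card_ne_zero
  have h1 : ψ x ^ Fintype.card G = 1 := by
    rw [← AddChar.map_nsmul_eq_pow, card_nsmul_eq_zero, AddChar.map_zero_eq_one]
  have h2 : ‖ψ x‖ ^ Fintype.card G = 1 := by
    rw [← norm_pow, h1, norm_one]
  rcases lt_trichotomy ‖ψ x‖ 1 with h | h | h
  · have := pow_lt_one₀ (norm_nonneg _) h hn
    rw [h2] at this; exact absurd this (lt_irrefl _)
  · exact h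
  · have := one_lt_pow₀ h hn
    rw [h2] at this; exact absurd this (lt_irrefl _)

lemma exp_le_cosh_add {y : ℝ} (t : ℝ) (hy : |y| ≤ 1) :
    Real.exp (t * y) ≤ Real.cosh t + y * Real.sinh t := by
  obtain ⟨hy1, hy2⟩ := abs_le.1 hy
  have h := convexOn_exp.2 (Set.mem_univ (-t)) (Set.mem_univ t)
    (show (0:ℝ) ≤ (1 - y) / 2 by linarith) (show (0:ℝ) ≤ (1 + y) / 2 by linarith) (by ring)
  simp only [smul_eq_mul] at h
  rw [show (1 - y) / 2 * (-t) + (1 + y) / 2 * t = t * y by ring] at h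
  calc Real.exp (t * y) ≤ (1 - y) / 2 * Real.exp (-t) + (1 + y) / 2 * Real.exp t := h
    _ = Real.cosh t + y * Real.sinh t := by rw [Real.cosh_eq, Real.sinh_eq]; ring

lemma dissociated_coe {Λ : Finset (AddChar G ℂ)} (h : Dissociated Λ) :
    AddDissociated (Λ : Set (AddChar G ℂ)) := by
  by_contra hcon
  rw [not_addDissociated_iff_exists_disjoint] at hcon
  obtain ⟨t, u, ht, hu, hdisj, hne, hsum⟩ := hcon
  have htΛ : t ⊆ Λ := by exact_mod_cast ht
  have huΛ : u ⊆ Λ := by exact_mod_cast hu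
  set η : AddChar G ℂ → ℤ := fun ψ => if ψ ∈ t then 1 else if ψ ∈ u then -1 else 0 with hη
  have hval : ∀ l, η l ∈ ({-1, 0, 1} : Set ℤ) := by
    intro l; simp only [hη]; split_ifs <;> simp
  have hrel : ∀ x, ∏ l ∈ Λ, (l x) ^ (η l) = 1 := by
    intro x
    have hsplit : ∀ l ∈ Λ, (l x) ^ (η l)
        = (if l ∈ t then l x else 1) * (if l ∈ u then (l x)⁻¹ else 1) := by
      intro l _
      simp only [hη]
      by_cases h1 : l ∈ t
      · have h2 : l ∉ u := Finset.disjoint_left.1 hdisj h1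
        simp [h1, h2]
      · by_cases h2 : l ∈ u
        · simp [h1, h2]
        · simp [h1, h2]
    rw [Finset.prod_congr rfl hsplit, Finset.prod_mul_distrib,
      Finset.prod_ite_mem Λ t (fun l => l x), Finset.prod_ite_mem Λ u (fun l => (l x)⁻¹),
      Finset.inter_eq_right.2 htΛ, Finset.inter_eq_right.2 huΛ,
      Finset.prod_inv_distrib, ← AddChar.sum_apply, ← AddChar.sum_apply, hsum]
    exact mul_inv_cancel₀ (addChar_ne_zero _ x)
  have hzero := h η hval hrel
  have htemp : t = ∅ := by
    rw [Finset.eq_empty_iff_forall_notMem]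
    intro l hl
    have := hzero l (htΛ hl)
    simp only [hη, if_pos hl] at this
    exact one_ne_zero this
  have huemp : u = ∅ := by
    rw [Finset.eq_empty_iff_forall_notMem]
    intro l hl
    have hlt : l ∉ t := Finset.disjoint_right.1 hdisj hl
    have := hzero l (huΛ hl)
    simp only [hη, if_neg hlt, if_pos hl] at this
    exact neg_ne_zero.2 one_ne_zero this
  exact hne (htemp.trans huemp.symm)

/-- The key moment estimate: a dissociated set inside the `ε`-large spectrum satisfies
the exponential inequality. -/
lemma chang_card_bound (A : Finset G) (hA : A.Nonempty) {ε : ℝ} (hε0 : 0 < ε)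
    {Λ : Finset (AddChar G ℂ)} (hdis : Dissociated Λ)
    (hspec : ∀ ψ ∈ Λ, ε * A.card ≤ ‖∑ x ∈ A, (starRingEnd ℂ) (ψ x)‖) :
    Real.exp (ε ^ 2 * Λ.card) * A.card ≤
      (Fintype.card G : ℝ) * Real.exp (ε ^ 2 * Λ.card / 2) := by
  have hApos : (0:ℝ) < A.card := by exact_mod_cast Finset.card_pos.2 hA
  set S : AddChar G ℂ → ℂ := fun ψ => ∑ x ∈ A, (starRingEnd ℂ) (ψ x) with hS
  set c : AddChar G ℂ → ℂ := fun ψ => (starRingEnd ℂ) (S ψ) / ((‖S ψ‖ : ℝ) : ℂ) with hc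
  have hSpos : ∀ ψ ∈ Λ, 0 < ‖S ψ‖ := fun ψ hψ =>
    lt_of_lt_of_le (by positivity) (hspec ψ hψ)
  have hcS : ∀ ψ ∈ Λ, c ψ * S ψ = ((‖S ψ‖ : ℝ) : ℂ) := by
    intro ψ hψ
    have hne : ((‖S ψ‖ : ℝ) : ℂ) ≠ 0 := by
      exact_mod_cast (hSpos ψ hψ).ne'
    have hconj : (starRingEnd ℂ) (S ψ) * S ψ = (((‖S ψ‖ : ℝ) : ℂ)) ^ 2 := by
      rw [← Complex.normSq_eq_conj_mul_self, Complex.normSq_eq_norm_sq]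
      push_cast; ring
    rw [hc]
    field_simp
    rw [hconj]
  have hcabs : ∀ ψ ∈ Λ, ‖c ψ‖ = 1 := by
    intro ψ hψ
    rw [hc]
    simp only [norm_div, Complex.norm_conj, Complex.norm_real, Real.norm_eq_abs,
      abs_of_pos (hSpos ψ hψ)]
    exact div_self (hSpos ψ hψ).ne'
  set h : G → ℝ := fun x => ∑ ψ ∈ Λ, (c ψ * (starRingEnd ℂ) (ψ x)).re with hh
  -- Step B : lower bound on the A-sum of h
  have hB : (ε * A.card) * Λ.card ≤ ∑ x ∈ A, h x := by
    have hswap : ∑ x ∈ A, h x = ∑ ψ ∈ Λ, (c ψ * S ψ).re := by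
      rw [hh]
      rw [Finset.sum_comm]
      refine Finset.sum_congr rfl fun ψ _ => ?_
      rw [hS, mul_sum, Complex.re_sum]
    rw [hswap]
    calc (ε * A.card) * Λ.card = ∑ _ψ ∈ Λ, ε * A.card := by
          rw [Finset.sum_const, nsmul_eq_mul]; ring
      _ ≤ ∑ ψ ∈ Λ, (c ψ * S ψ).re := by
          refine Finset.sum_le_sum fun ψ hψ => ?_
          rw [hcS ψ hψ, Complex.ofReal_re]
          exact hspec ψ hψ
  -- Step C : pointwise bound
  have hC : ∀ x : G, Real.exp (ε * h x)
      ≤ ∏ ψ ∈ Λ, (Real.cosh ε + (c ψ * (starRingEnd ℂ) (ψ x)).re * Real.sinh ε) := by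
    intro x
    rw [hh, Finset.mul_sum, Real.exp_sum]
    refine Finset.prod_le_prod (fun ψ _ => (Real.exp_pos _).le) fun ψ hψ => ?_
    have habs : |(c ψ * (starRingEnd ℂ) (ψ x)).re| ≤ 1 := by
      calc |(c ψ * (starRingEnd ℂ) (ψ x)).re| ≤ ‖c ψ * (starRingEnd ℂ) (ψ x)‖ :=
            Complex.abs_re_le_norm _
        _ = 1 := by
            rw [norm_mul, Complex.norm_conj, hcabs ψ hψ, addChar_abs, one_mul]
    have := exp_le_cosh_add ε habs
    linarith [this]
  -- Step D : the randomisation identity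
  have hD : ∑ x : G, ∏ ψ ∈ Λ, (Real.cosh ε + (c ψ * (starRingEnd ℂ) (ψ x)).re * Real.sinh ε)
      = (Fintype.card G : ℝ) * (Real.cosh ε) ^ Λ.card := by
    set C : AddChar G ℂ → ℝ := fun ψ => if ψ ∈ Λ then Real.cosh ε else 1 with hCdef
    set D : AddChar G ℂ → ℂ :=
      fun ψ => if ψ ∈ Λ then (Real.sinh ε : ℂ) * (starRingEnd ℂ) (c ψ) else 0 with hDdef
    have hsupp : AddDissociated {ψ : AddChar G ℂ | D ψ ≠ 0} := by
      refine (dissociated_coe hdis).subset fun ψ hψ => ?_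
      by_contra hmem
      apply hψ
      simp only [hDdef]
      rw [if_neg (by exact_mod_cast hmem)]
    have hrand := AddDissociated.randomisation C D hsupp
    rw [Finset.expect_eq_sum_div_card, div_eq_iff (by positivity), Finset.card_univ] at hrand
    have hfac : ∀ x : G, ∏ ψ, (C ψ + (D ψ * ψ x).re)
        = ∏ ψ ∈ Λ, (Real.cosh ε + (c ψ * (starRingEnd ℂ) (ψ x)).re * Real.sinh ε) := by
      intro x
      rw [← Finset.prod_subset (Finset.subset_univ Λ) (fun ψ _ hψ => by
        simp only [hCdef, hDdef, if_neg hψ]; simp)]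
      refine Finset.prod_congr rfl fun ψ hψ => ?_
      simp only [hCdef, hDdef, if_pos hψ]
      have hre : ((Real.sinh ε : ℂ) * (starRingEnd ℂ) (c ψ) * ψ x).re
          = (c ψ * (starRingEnd ℂ) (ψ x)).re * Real.sinh ε := by
        rw [mul_assoc, Complex.re_ofReal_mul]
        have : ((starRingEnd ℂ) (c ψ) * ψ x).re = (c ψ * (starRingEnd ℂ) (ψ x)).re := by
          rw [← Complex.conj_re ((starRingEnd ℂ) (c ψ) * ψ x), map_mul, Complex.conj_conj]
        rw [this]; ring
      rw [hre]
    have hCprod : ∏ ψ, C ψ = (Real.cosh ε) ^ Λ.card := by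
      simp only [hCdef]
      rw [Finset.prod_ite_mem, Finset.univ_inter, Finset.prod_const]
    calc ∑ x : G, ∏ ψ ∈ Λ, (Real.cosh ε + (c ψ * (starRingEnd ℂ) (ψ x)).re * Real.sinh ε)
        = ∑ x : G, ∏ ψ, (C ψ + (D ψ * ψ x).re) := by
          exact Finset.sum_congr rfl fun x _ => (hfac x).symm
      _ = (∏ ψ, C ψ) * (Fintype.card G : ℝ) := hrand
      _ = (Fintype.card G : ℝ) * (Real.cosh ε) ^ Λ.card := by rw [hCprod]; ring
  -- Step A' : Jensen
  have hJ : Real.exp (ε ^ 2 * Λ.card) * A.card ≤ ∑ x ∈ A, Real.exp (ε * h x) := by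
    have hsum1 : ∑ _x ∈ A, (A.card : ℝ)⁻¹ = 1 := by
      rw [Finset.sum_const, nsmul_eq_mul, mul_inv_cancel₀ hApos.ne']
    have hjen := convexOn_exp.map_sum_le (t := A) (w := fun _ => (A.card : ℝ)⁻¹)
      (p := fun x => ε * h x) (fun i _ => by positivity) hsum1 (fun i _ => Set.mem_univ _)
    simp only [smul_eq_mul] at hjen
    have harg : ε ^ 2 * Λ.card ≤ ∑ x ∈ A, (A.card : ℝ)⁻¹ * (ε * h x) := by
      have : ∑ x ∈ A, (A.card : ℝ)⁻¹ * (ε * h x)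
          = (A.card : ℝ)⁻¹ * (ε * ∑ x ∈ A, h x) := by
        rw [← Finset.mul_sum, ← Finset.mul_sum]
      rw [this]
      have hB' : ε * ((ε * A.card) * Λ.card) ≤ ε * ∑ x ∈ A, h x :=
        mul_le_mul_of_nonneg_left hB hε0.le
      calc ε ^ 2 * Λ.card = (A.card : ℝ)⁻¹ * (ε * ((ε * A.card) * Λ.card)) := by
            field_simp
        _ ≤ (A.card : ℝ)⁻¹ * (ε * ∑ x ∈ A, h x) := by
            exact mul_le_mul_of_nonneg_left hB' (by positivity)
    calc Real.exp (ε ^ 2 * Λ.card) * A.card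
        ≤ Real.exp (∑ x ∈ A, (A.card : ℝ)⁻¹ * (ε * h x)) * A.card := by
          have := Real.exp_le_exp.2 harg
          exact mul_le_mul_of_nonneg_right this hApos.le
      _ ≤ (∑ x ∈ A, (A.card : ℝ)⁻¹ * Real.exp (ε * h x)) * A.card := by
          exact mul_le_mul_of_nonneg_right hjen hApos.le
      _ = ∑ x ∈ A, Real.exp (ε * h x) := by
          rw [← Finset.mul_sum]
          field_simp
  -- combine
  have hchain : ∑ x ∈ A, Real.exp (ε * h x)
      ≤ (Fintype.card G : ℝ) * (Real.cosh ε) ^ Λ.card := by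
    calc ∑ x ∈ A, Real.exp (ε * h x) ≤ ∑ x : G, Real.exp (ε * h x) :=
          Finset.sum_le_sum_of_subset_of_nonneg (Finset.subset_univ A)
            (fun x _ _ => (Real.exp_pos _).le)
      _ ≤ ∑ x : G, ∏ ψ ∈ Λ, (Real.cosh ε + (c ψ * (starRingEnd ℂ) (ψ x)).re * Real.sinh ε) :=
          Finset.sum_le_sum fun x _ => hC x
      _ = (Fintype.card G : ℝ) * (Real.cosh ε) ^ Λ.card := hD
  have hcosh : (Real.cosh ε) ^ Λ.card ≤ Real.exp (ε ^ 2 * Λ.card / 2) := by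
    calc (Real.cosh ε) ^ Λ.card ≤ (Real.exp (ε ^ 2 / 2)) ^ Λ.card :=
          pow_le_pow_left₀ (le_of_lt (Real.cosh_pos ε)) (Real.cosh_le_exp_half_sq ε) _
      _ = Real.exp (ε ^ 2 * Λ.card / 2) := by
          rw [← Real.exp_nat_mul]; ring_nf
  calc Real.exp (ε ^ 2 * Λ.card) * A.card ≤ ∑ x ∈ A, Real.exp (ε * h x) := hJ
    _ ≤ (Fintype.card G : ℝ) * (Real.cosh ε) ^ Λ.card := hchain
    _ ≤ (Fintype.card G : ℝ) * Real.exp (ε ^ 2 * Λ.card / 2) := by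
        exact mul_le_mul_of_nonneg_left hcosh (by positivity)

end Helpers

/-- Chang's lemma for finite abelian groups. -/
theorem chang_abelian {G : Type*} [AddCommGroup G] [Fintype G]
    (A : Finset G) (α ε : ℝ) (hα : (A.card : ℝ) = α * (Fintype.card G : ℝ))
    (hα0 : 0 < α) (hε0 : 0 < ε) (hε1 : ε < 1) :
    ∃ Λ : Finset (AddChar G ℂ),
      Dissociated Λ ∧
      (Λ.card : ℝ) ≤ 2 / ε ^ 2 * Real.log (1 / α) ∧
      ∀ ξ : AddChar G ℂ, ξ ∉ spanSet Λ →
        ‖(∑ x ∈ A, (starRingEnd ℂ) (ξ x)) / (A.card : ℂ)‖ ≤ ε := by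
  have hG0 : (0:ℝ) < Fintype.card G := by exact_mod_cast Fintype.card_pos
  have hA0 : (0:ℝ) < A.card := by rw [hα]; positivity
  have hAne : A.Nonempty := Finset.card_pos.1 (by exact_mod_cast hA0)
  set Spec : Finset (AddChar G ℂ) := Finset.univ.filter
    (fun ξ => ε < ‖(∑ x ∈ A, (starRingEnd ℂ) (ξ x)) / (A.card : ℂ)‖) with hSpec
  have habsdiv : ∀ ξ : AddChar G ℂ,
      ‖(∑ x ∈ A, (starRingEnd ℂ) (ξ x)) / (A.card : ℂ)‖
      = ‖∑ x ∈ A, (starRingEnd ℂ) (ξ x)‖ / (A.card : ℝ) := by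
    intro ξ
    rw [norm_div, Complex.norm_natCast]
  have hSpecmem : ∀ ξ ∈ Spec,
      ε * A.card ≤ ‖∑ x ∈ A, (starRingEnd ℂ) (ξ x)‖ := by
    intro ξ hξ
    rw [hSpec, Finset.mem_filter] at hξ
    have := hξ.2
    rw [habsdiv ξ, lt_div_iff₀ hA0] at this
    exact this.le
  set P : Finset (Finset (AddChar G ℂ)) := Spec.powerset.filter (fun s => Dissociated s)
    with hP
  have hPne : P.Nonempty := by
    refine ⟨∅, ?_⟩
    rw [hP, Finset.mem_filter]
    refine ⟨Finset.empty_mem_powerset _, ?_⟩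
    intro η _ _ l hl
    exact absurd hl (Finset.notMem_empty l)
  obtain ⟨Λ, hΛP, hmax⟩ := P.exists_max_image Finset.card hPne
  rw [hP, Finset.mem_filter, Finset.mem_powerset] at hΛP
  obtain ⟨hΛSpec, hΛdis⟩ := hΛP
  refine ⟨Λ, hΛdis, ?_, ?_⟩
  · -- size bound
    have hkey := chang_card_bound A hAne hε0 hΛdis
      (fun ψ hψ => hSpecmem ψ (hΛSpec hψ))
    rw [hα] at hkey
    have hexp : Real.exp (ε ^ 2 * Λ.card) ≤ (1 / α) * Real.exp (ε ^ 2 * Λ.card / 2) := by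
      rw [← mul_le_mul_iff_of_pos_right (by positivity : (0:ℝ) < α * Fintype.card G)]
      calc Real.exp (ε ^ 2 * Λ.card) * (α * Fintype.card G) ≤
            (Fintype.card G : ℝ) * Real.exp (ε ^ 2 * Λ.card / 2) := hkey
        _ = 1 / α * Real.exp (ε ^ 2 * Λ.card / 2) * (α * Fintype.card G) := by
            field_simp
    have hlog : ε ^ 2 * Λ.card ≤ Real.log (1 / α) + ε ^ 2 * Λ.card / 2 := by
      have h1 := Real.log_le_log (Real.exp_pos _) hexp
      rw [Real.log_exp, Real.log_mul (by positivity) (Real.exp_ne_zero _),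
        Real.log_exp] at h1
      exact h1
    have hε2 : (0:ℝ) < ε ^ 2 := by positivity
    rw [div_mul_eq_mul_div, le_div_iff₀ hε2]
    nlinarith [hlog]
  · -- spectrum covered by the span
    intro ξ hξspan
    by_contra hgt
    push_neg at hgt
    have hξSpec : ξ ∈ Spec := by
      rw [hSpec, Finset.mem_filter]; exact ⟨Finset.mem_univ _, hgt⟩
    apply hξspan
    by_cases hξΛ : ξ ∈ Λ
    · refine ⟨fun l => if l = ξ then 1 else 0,
        fun l => by by_cases h : l = ξ <;> simp [h], fun x => ?_⟩
      rw [Finset.prod_eq_single ξ (fun b _ hb => by simp [hb]) (fun h => absurd hξΛ h)]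
      simp
    · -- maximality: insert ξ Λ is not dissociated
      have hnd : ¬ Dissociated (insert ξ Λ) := by
        intro hd
        have hmem : insert ξ Λ ∈ P := by
          rw [hP, Finset.mem_filter, Finset.mem_powerset]
          exact ⟨Finset.insert_subset hξSpec hΛSpec, hd⟩
        have := hmax _ hmem
        rw [Finset.card_insert_of_notMem hξΛ] at this
        omega
      rw [Dissociated] at hnd
      push_neg at hnd
      obtain ⟨η, hηval, hηrel, l₀, hl₀mem, hl₀ne⟩ := hnd
      have hprod : ∀ x, (ξ x) ^ (η ξ) * ∏ l ∈ Λ, (l x) ^ (η l) = 1 := by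
        intro x
        have := hηrel x
        rwa [Finset.prod_insert hξΛ] at this
      have hηξ : η ξ ≠ 0 := by
        intro h0
        have hres : ∀ x, ∏ l ∈ Λ, (l x) ^ (η l) = 1 := by
          intro x
          have := hprod x
          rwa [h0, zpow_zero, one_mul] at this
        have hz := hΛdis η hηval hres
        rcases Finset.mem_insert.1 hl₀mem with rfl | hl
        · exact hl₀ne h0
        · exact hl₀ne (hz _ hl)
      have hηval' : ∀ l, η l = -1 ∨ η l = 0 ∨ η l = 1 := fun l => by
        simpa [Set.mem_insert_iff, Set.mem_singleton_iff] using hηval l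
      rcases hηval' ξ with hm1 | h0 | hp1
      · -- η ξ = -1 : ξ = ∏ l ^ η l
        refine ⟨fun l => if l ∈ Λ then η l else 0, fun l => by
          by_cases hl : l ∈ Λ
          · simpa [hl] using hηval l
          · simp [hl], fun x => ?_⟩
        have hx := hprod x
        rw [show η ξ = -1 from hm1, zpow_neg_one] at hx
        have := (inv_mul_eq_one₀ (addChar_ne_zero ξ x)).1 hx
        rw [this]
        exact Finset.prod_congr rfl fun l hl => by simp [hl]
      · exact absurd h0 hηξ
      · -- η ξ = 1 : ξ = ∏ l ^ (-η l)
        refine ⟨fun l => if l ∈ Λ then -η l else 0, fun l => by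
          by_cases hl : l ∈ Λ
          · rcases hηval' l with h | h | h <;> simp [hl, h]
          · simp [hl], fun x => ?_⟩
        have hx := hprod x
        rw [show η ξ = 1 from hp1, zpow_one] at hx
        have hinv : ξ x = (∏ l ∈ Λ, (l x) ^ (η l))⁻¹ := eq_inv_of_mul_eq_one_left hx
        rw [hinv, ← Finset.prod_inv_distrib]
        refine Finset.prod_congr rfl fun l hl => ?_
        simp [hl, zpow_neg]
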